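/- arXiv:1812.05896 — 5 statements merged into one kernel-verified Lean document; each statement's English description precedes it below -/
import Mathlib

section
/- The derivative of V at 0 equals 1/2: V'(0) = 1/2, where V(x) = (∫_{0}^{2π} cos θ · e^{x cos θ} dθ) / (∫_{0}^{2π} e^{x cos θ} dθ). -/
open Real MeasureTheory intervalIntegral

noncomputable def V (x : ℝ) : ℝ :=
  (∫ θ in (0:ℝ)..(2*π), Real.cos θ * Real.exp (x * Real.cos θ)) /
  (∫ θ in (0:ℝ)..(2*π), Real.exp (x * Real.cos θ))

lemma aux_deriv (g : ℝ → ℝ) (hg : Continuous g) (hb : ∀ θ, |g θ| ≤ 1) :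
    HasDerivAt (fun x => ∫ θ in (0:ℝ)..(2*π), g θ * Real.exp (x * Real.cos θ))
      (∫ θ in (0:ℝ)..(2*π), g θ * Real.cos θ) 0 := by
  have key := intervalIntegral.hasDerivAt_integral_of_dominated_loc_of_deriv_le
    (F := fun x t => g t * Real.exp (x * Real.cos t))
    (F' := fun x t => g t * (Real.cos t * Real.exp (x * Real.cos t)))
    (μ := volume) (x₀ := (0:ℝ)) (a := 0) (b := 2*π) (bound := fun _ => Real.exp 1)
    (s := Metric.ball 0 1) (Metric.ball_mem_nhds 0 one_pos)
    (by
      filter_upwards with x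
      exact (hg.mul (Real.continuous_exp.comp (continuous_const.mul Real.continuous_cos))).aestronglyMeasurable)
    (by
      apply Continuous.intervalIntegrable
      exact hg.mul (Real.continuous_exp.comp (continuous_const.mul Real.continuous_cos)))
    (by
      exact (hg.mul (Real.continuous_cos.mul
        (Real.continuous_exp.comp (continuous_const.mul Real.continuous_cos)))).aestronglyMeasurable)
    (by
      filter_upwards with t _ x hx
      have hx1 : |x| < 1 := by simpa [Real.dist_eq] using hx
      have hct : |Real.cos t| ≤ 1 := Real.abs_cos_le_one t
      have h1 : |x * Real.cos t| ≤ 1 := by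
        calc |x * Real.cos t| = |x| * |Real.cos t| := abs_mul _ _
        _ ≤ 1 * 1 := mul_le_mul hx1.le hct (abs_nonneg _) zero_le_one
        _ = 1 := by ring
      have he : Real.exp (x * Real.cos t) ≤ Real.exp 1 :=
        Real.exp_le_exp.2 ((abs_le.1 h1).2)
      calc ‖g t * (Real.cos t * Real.exp (x * Real.cos t))‖
          = |g t| * (|Real.cos t| * Real.exp (x * Real.cos t)) := by
            rw [norm_mul, norm_mul, Real.norm_eq_abs, Real.norm_eq_abs, Real.norm_eq_abs,
              abs_of_pos (Real.exp_pos _)]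
        _ ≤ 1 * (1 * Real.exp 1) := by
            apply mul_le_mul (hb t) _ (by positivity) zero_le_one
            exact mul_le_mul hct he (Real.exp_pos _).le zero_le_one
        _ = Real.exp 1 := by ring)
    (by exact intervalIntegrable_const)
    (by
      filter_upwards with t _ x _
      have h := (((hasDerivAt_id x).mul_const (Real.cos t)).exp).const_mul (g t)
      refine h.congr_deriv ?_
      simp only [id_eq]; ring)
  have h := key.2
  simpa using h

lemma exp_zero_int : (∫ θ in (0:ℝ)..(2*π), Real.exp ((0:ℝ) * Real.cos θ)) = 2*π := by
  simp [Real.pi_pos.le]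

theorem V_deriv_zero : HasDerivAt V (1/2) 0 := by
  have hN : HasDerivAt (fun x => ∫ θ in (0:ℝ)..(2*π), Real.cos θ * Real.exp (x * Real.cos θ))
      (∫ θ in (0:ℝ)..(2*π), Real.cos θ * Real.cos θ) 0 :=
    aux_deriv Real.cos Real.continuous_cos Real.abs_cos_le_one
  have hD : HasDerivAt (fun x => ∫ θ in (0:ℝ)..(2*π), Real.exp (x * Real.cos θ))
      (∫ θ in (0:ℝ)..(2*π), Real.cos θ) 0 := by
    have := aux_deriv (fun _ => 1) continuous_const (fun θ => by norm_num)
    simpa using this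
  have hNval : (∫ θ in (0:ℝ)..(2*π), Real.cos θ * Real.cos θ) = π := by
    simp_rw [← sq]
    rw [integral_cos_sq]
    simp [Real.sin_two_pi, Real.cos_two_pi]
  have hDval : (∫ θ in (0:ℝ)..(2*π), Real.cos θ) = 0 := by
    rw [integral_cos]; simp [Real.sin_two_pi]
  have hD0 : (∫ θ in (0:ℝ)..(2*π), Real.exp ((0:ℝ) * Real.cos θ)) = 2*π := exp_zero_int
  have hN0 : (∫ θ in (0:ℝ)..(2*π), Real.cos θ * Real.exp ((0:ℝ) * Real.cos θ)) = 0 := by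
    simp [hDval]
  rw [hNval] at hN
  rw [hDval] at hD
  have hne : (∫ θ in (0:ℝ)..(2*π), Real.exp ((0:ℝ) * Real.cos θ)) ≠ 0 := by
    rw [hD0]; positivity
  have := hN.div hD hne
  refine HasDerivAt.congr_deriv this ?_
  rw [hD0, hN0]
  field_simp
  ring
end

section
/- V(x) < x/2 for all x > 0, where V(x) = (∫_{0}^{2π} cos θ e^{x cos θ} dθ)/(∫_{0}^{2π} e^{x cos θ} dθ). -/
open Real MeasureTheory intervalIntegral

theorem V_lt_half_x (x : ℝ) (hx : 0 < x) : V x < x / 2 := by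
  have hπ : 0 < π := Real.pi_pos
  set f : ℝ → ℝ := fun θ => Real.exp (x * Real.cos θ) with hf
  set s : ℝ → ℝ := fun θ => Real.sin θ ^ 2 * Real.cos θ * Real.exp (x * Real.cos θ) with hs
  have hfc : Continuous f := by fun_prop
  have hsc : Continuous s := by fun_prop
  have hcfc : Continuous (fun θ => Real.cos θ * f θ) := by fun_prop
  have hqc : Continuous (fun θ => (x/2 - Real.cos θ) * f θ) := by fun_prop
  -- denominator positive
  have hD : 0 < ∫ θ in (0:ℝ)..(2*π), f θ := by
    apply intervalIntegral_pos_of_pos (hfc.intervalIntegrable 0 (2*π))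
    · intro t; positivity
    · linarith
  -- FTC step
  set G : ℝ → ℝ := fun θ => (-Real.sin θ + x/4 * Real.sin (2*θ)) * Real.exp (x * Real.cos θ)
    with hG
  have hderiv : ∀ t ∈ Set.uIcc (0:ℝ) (2*π),
      HasDerivAt G ((x/2 - Real.cos t) * f t - x^2/2 * s t) t := by
    intro t _
    have h2 : HasDerivAt (fun θ : ℝ => Real.exp (x * Real.cos θ))
        (Real.exp (x * Real.cos t) * (x * -Real.sin t)) t :=
      (((Real.hasDerivAt_cos t).const_mul x).exp)
    have hinner : HasDerivAt (fun y : ℝ => 2*y) 2 t := by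
      simpa using (hasDerivAt_id t).const_mul (2:ℝ)
    have hsin2 : HasDerivAt (fun θ : ℝ => Real.sin (2*θ)) (Real.cos (2*t) * 2) t :=
      (Real.hasDerivAt_sin (2*t)).comp t hinner
    have h1 : HasDerivAt (fun θ : ℝ => -Real.sin θ + x/4 * Real.sin (2*θ))
        (-Real.cos t + x/4 * (Real.cos (2*t) * 2)) t :=
      (Real.hasDerivAt_sin t).neg.add (hsin2.const_mul (x/4))
    have := h1.mul h2
    convert this using 1
    · rfl
    · rfl
    · rfl
    simp only [hf, hs, Real.cos_two_mul, Real.sin_two_mul]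
    linear_combination (-(x * Real.exp (x * Real.cos t))) * (Real.sin_sq_add_cos_sq t)
  have hqint : IntervalIntegrable (fun θ => (x/2 - Real.cos θ) * f θ) volume 0 (2*π) :=
    hqc.intervalIntegrable 0 (2*π)
  have hsint : IntervalIntegrable s volume 0 (2*π) := hsc.intervalIntegrable 0 (2*π)
  have hFTC : (∫ t in (0:ℝ)..(2*π), ((x/2 - Real.cos t) * f t - x^2/2 * s t)) = 0 := by
    rw [intervalIntegral.integral_eq_sub_of_hasDerivAt hderiv
      (hqint.sub (hsint.const_mul (x^2/2)))]
    have h4 : Real.sin (2*(2*π)) = 0 := by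
      have : (2:ℝ)*(2*π) = (4:ℤ)*π := by push_cast; ring
      rw [this, Real.sin_int_mul_pi]
    simp [hG, Real.sin_two_pi, h4]
  have hkey : (∫ θ in (0:ℝ)..(2*π), (x/2 - Real.cos θ) * f θ)
      = x^2/2 * ∫ θ in (0:ℝ)..(2*π), s θ := by
    rw [intervalIntegral.integral_sub hqint (hsint.const_mul (x^2/2)),
      intervalIntegral.integral_const_mul] at hFTC
    linarith
  -- positivity of ∫ s
  have hs_half : ∀ a b : ℝ, IntervalIntegrable s volume a b := fun a b =>
    hsc.intervalIntegrable a b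
  have hsplit : (∫ θ in (0:ℝ)..(2*π), s θ)
      = (∫ θ in (0:ℝ)..π, s θ) + ∫ θ in π..(2*π), s θ :=
    (integral_add_adjacent_intervals (hs_half 0 π) (hs_half π (2*π))).symm
  have hshift : (∫ θ in π..(2*π), s θ) = ∫ θ in (0:ℝ)..π, s (θ + π) := by
    rw [intervalIntegral.integral_comp_add_right s π]
    norm_num [two_mul]
  set h : ℝ → ℝ := fun θ => s θ + s (θ + π) with hh
  have hhc : Continuous h := by fun_prop
  have hcompint : IntervalIntegrable (fun θ => s (θ + π)) volume 0 π :=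
    Continuous.intervalIntegrable (by fun_prop) 0 π
  have hsum : (∫ θ in (0:ℝ)..(2*π), s θ) = ∫ θ in (0:ℝ)..π, h θ := by
    rw [hsplit, hshift, ← intervalIntegral.integral_add (hs_half 0 π) hcompint]
  have hval : ∀ θ : ℝ, h θ = Real.sin θ ^ 2 * Real.cos θ *
      (Real.exp (x * Real.cos θ) - Real.exp (-(x * Real.cos θ))) := by
    intro θ
    simp only [hh, hs, Real.sin_add_pi, Real.cos_add_pi, mul_neg, neg_sq]
    ring
  have hpos1 : 0 < ∫ θ in (0:ℝ)..(π/2), h θ := by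
    apply intervalIntegral_pos_of_pos_on (hhc.intervalIntegrable 0 (π/2))
    · intro t ht
      rw [hval]
      have hsin : 0 < Real.sin t := Real.sin_pos_of_pos_of_lt_pi ht.1 (by linarith [ht.2])
      have hcos : 0 < Real.cos t := Real.cos_pos_of_mem_Ioo ⟨by linarith [ht.1], ht.2⟩
      have hexp : Real.exp (-(x * Real.cos t)) < Real.exp (x * Real.cos t) := by
        apply Real.exp_lt_exp.2; nlinarith
      exact mul_pos (mul_pos (by positivity) hcos) (sub_pos.2 hexp)
    · linarith
  have hpos2 : 0 ≤ ∫ θ in (π/2)..π, h θ := by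
    apply intervalIntegral.integral_nonneg (by linarith)
    intro t ht
    rw [hval]
    have hcos : Real.cos t ≤ 0 := Real.cos_nonpos_of_pi_div_two_le_of_le ht.1 (by linarith [ht.2])
    have hexp : Real.exp (x * Real.cos t) ≤ Real.exp (-(x * Real.cos t)) := by
      apply Real.exp_le_exp.2; nlinarith
    have h1 : 0 ≤ Real.cos t * (Real.exp (x * Real.cos t) - Real.exp (-(x * Real.cos t))) :=
      by nlinarith [mul_nonneg (neg_nonneg.2 hcos) (neg_nonneg.2 (sub_nonpos.2 hexp))]
    rw [mul_assoc]
    exact mul_nonneg (sq_nonneg _) h1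
  have hs_pos : 0 < ∫ θ in (0:ℝ)..(2*π), s θ := by
    rw [hsum, ← integral_add_adjacent_intervals (hhc.intervalIntegrable 0 (π/2))
      (hhc.intervalIntegrable (π/2) π)]
    linarith
  -- conclude
  have hA : 0 < ∫ θ in (0:ℝ)..(2*π), (x/2 - Real.cos θ) * f θ := by
    rw [hkey]; positivity
  have hlin : (∫ θ in (0:ℝ)..(2*π), (x/2 - Real.cos θ) * f θ)
      = x/2 * (∫ θ in (0:ℝ)..(2*π), f θ) - ∫ θ in (0:ℝ)..(2*π), Real.cos θ * f θ := by
    rw [← intervalIntegral.integral_const_mul, ← intervalIntegral.integral_sub (f := fun θ => x/2 * f θ)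
      ((continuous_const.mul hfc).intervalIntegrable 0 (2*π)) (hcfc.intervalIntegrable 0 (2*π))]
    congr 1; ext θ; ring
  rw [hlin] at hA
  rw [V, div_lt_iff₀ hD]
  linarith
end

section
/- lim_{x → ∞} V(x) = 1, where V(x) = (∫_{0}^{2π} cos θ e^{x cos θ} dθ)/(∫_{0}^{2π} e^{x cos θ} dθ). -/
open Real MeasureTheory intervalIntegral

open Filter in
theorem V_tendsto_one : Filter.Tendsto V Filter.atTop (nhds 1) := by
  -- Notation
  set D : ℝ → ℝ := fun x => ∫ θ in (0:ℝ)..(2*π), Real.exp (x * Real.cos θ) with hDdef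
  set N : ℝ → ℝ := fun x => ∫ θ in (0:ℝ)..(2*π),
      (1 - Real.cos θ) * Real.exp (x * Real.cos θ) with hNdef
  have hπ : (0:ℝ) < π := Real.pi_pos
  have h2π : (0:ℝ) < 2*π := by linarith
  have hcontE : ∀ x : ℝ, Continuous fun θ : ℝ => Real.exp (x * Real.cos θ) := by
    intro x; fun_prop
  have hintE : ∀ x a b : ℝ, IntervalIntegrable (fun θ => Real.exp (x * Real.cos θ))
      volume a b := fun x a b => (hcontE x).intervalIntegrable a b
  have hintCE : ∀ x : ℝ, IntervalIntegrable (fun θ => Real.cos θ * Real.exp (x * Real.cos θ))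
      volume 0 (2*π) := by
    intro x
    exact (Real.continuous_cos.mul (hcontE x)).intervalIntegrable 0 (2*π)
  have hintN : ∀ x : ℝ, IntervalIntegrable
      (fun θ => (1 - Real.cos θ) * Real.exp (x * Real.cos θ)) volume 0 (2*π) := by
    intro x
    exact ((continuous_const.sub Real.continuous_cos).mul (hcontE x)).intervalIntegrable 0 (2*π)
  -- D is positive
  have hD_pos : ∀ x : ℝ, 0 < D x := by
    intro x
    exact intervalIntegral_pos_of_pos (hintE x 0 (2*π)) (fun θ => Real.exp_pos _) h2π
  -- N is nonnegative
  have hN_nonneg : ∀ x : ℝ, 0 ≤ N x := by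
    intro x
    apply intervalIntegral.integral_nonneg (by linarith)
    intro θ _
    have := Real.cos_le_one θ
    have := Real.exp_pos (x * Real.cos θ)
    nlinarith
  -- N x = D x - ∫ cos·exp
  have hNDV : ∀ x : ℝ, V x - 1 = -(N x / D x) := by
    intro x
    have hsub : N x = D x - ∫ θ in (0:ℝ)..(2*π), Real.cos θ * Real.exp (x * Real.cos θ) := by
      show (∫ θ in (0:ℝ)..(2*π), (1 - Real.cos θ) * Real.exp (x * Real.cos θ))
        = (∫ θ in (0:ℝ)..(2*π), Real.exp (x * Real.cos θ))
          - ∫ θ in (0:ℝ)..(2*π), Real.cos θ * Real.exp (x * Real.cos θ)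
      rw [← intervalIntegral.integral_sub (hintE x 0 (2*π)) (hintCE x)]
      exact intervalIntegral.integral_congr (fun θ _ => by ring)
    have hD := (hD_pos x).ne'
    have hC : (∫ θ in (0:ℝ)..(2*π), Real.cos θ * Real.exp (x * Real.cos θ)) = D x - N x := by
      linarith [hsub]
    have hV : V x = (D x - N x) / D x := by
      rw [V, hC]
    rw [hV]
    field_simp
    ring
  -- lower bound on D
  have hD_lower : ∀ x : ℝ, 0 ≤ x → ∀ δ' : ℝ, 0 < δ' → δ' ≤ π →
      δ' * Real.exp (x * Real.cos δ') ≤ D x := by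
    intro x hx δ' hδ'0 hδ'π
    have hsplit : D x = (∫ θ in (0:ℝ)..δ', Real.exp (x * Real.cos θ))
        + ∫ θ in δ'..(2*π), Real.exp (x * Real.cos θ) := by
      rw [hDdef]
      exact (intervalIntegral.integral_add_adjacent_intervals (hintE x 0 δ')
        (hintE x δ' (2*π))).symm
    have h1 : δ' * Real.exp (x * Real.cos δ') ≤ ∫ θ in (0:ℝ)..δ', Real.exp (x * Real.cos θ) := by
      have := intervalIntegral.integral_mono_on (le_of_lt hδ'0)
        ((continuous_const (y := Real.exp (x * Real.cos δ'))).intervalIntegrable 0 δ')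
        (hintE x 0 δ') (fun θ hθ => by
          have hcos : Real.cos δ' ≤ Real.cos θ :=
            Real.cos_le_cos_of_nonneg_of_le_pi hθ.1 hδ'π hθ.2
          exact Real.exp_le_exp.2 (by nlinarith))
      simpa [mul_comm] using this
    have h2 : 0 ≤ ∫ θ in δ'..(2*π), Real.exp (x * Real.cos θ) := by
      apply intervalIntegral.integral_nonneg (by linarith)
      intro θ _; exact (Real.exp_pos _).le
    linarith
  -- upper bound on N
  have hN_upper : ∀ x : ℝ, 0 ≤ x → ∀ δ : ℝ, 0 < δ → δ ≤ π →
      N x ≤ (1 - Real.cos δ) * D x + (2*(2*π)) * Real.exp (x * Real.cos δ) := by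
    intro x hx δ hδ0 hδπ
    have hmono : N x ≤ ∫ θ in (0:ℝ)..(2*π),
        ((1 - Real.cos δ) * Real.exp (x * Real.cos θ) + 2 * Real.exp (x * Real.cos δ)) := by
      apply intervalIntegral.integral_mono_on (by linarith) (hintN x)
      · exact ((continuous_const.mul (hcontE x)).add continuous_const).intervalIntegrable 0 (2*π)
      · intro θ _
        have hc1 := Real.cos_le_one θ
        have hc2 := Real.neg_one_le_cos θ
        have hcδ1 := Real.cos_le_one δ
        have he := Real.exp_pos (x * Real.cos θ)
        have heδ := Real.exp_pos (x * Real.cos δ)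
        rcases le_or_gt (Real.cos δ) (Real.cos θ) with h | h
        · nlinarith
        · have hee : Real.exp (x * Real.cos θ) ≤ Real.exp (x * Real.cos δ) :=
            Real.exp_le_exp.2 (by nlinarith)
          nlinarith
    have heq : (∫ θ in (0:ℝ)..(2*π),
        ((1 - Real.cos δ) * Real.exp (x * Real.cos θ) + 2 * Real.exp (x * Real.cos δ)))
        = (1 - Real.cos δ) * D x + (2*(2*π)) * Real.exp (x * Real.cos δ) := by
      rw [intervalIntegral.integral_add ((hintE x 0 (2*π)).const_mul _)
        (continuous_const.intervalIntegrable 0 (2*π)),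
        intervalIntegral.integral_const_mul, intervalIntegral.integral_const]
      rw [hDdef]; ring_nf
    linarith [hmono, heq.le]
  -- main ε-argument
  rw [Metric.tendsto_atTop]
  intro ε hε
  -- choose δ
  obtain ⟨δ₀, hδ₀, hδ₀close⟩ := Metric.continuousAt_iff.1 Real.continuous_cos.continuousAt
    (ε/2) (by linarith)
  set δ : ℝ := min (π/2) (δ₀/2) with hδdef
  have hδ0 : 0 < δ := lt_min (by linarith) (by linarith)
  have hδπ : δ ≤ π := le_trans (min_le_left _ _) (by linarith)
  have hδcos : 1 - Real.cos δ < ε/2 := by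
    have : dist δ 0 < δ₀ := by
      rw [Real.dist_eq, sub_zero, abs_of_pos hδ0]
      exact lt_of_le_of_lt (min_le_right _ _) (by linarith)
    have h := hδ₀close this
    rw [Real.dist_eq, Real.cos_zero] at h
    have := abs_lt.1 h
    linarith [this.1]
  have hδcos0 : 0 ≤ 1 - Real.cos δ := by linarith [Real.cos_le_one δ]
  set δ' : ℝ := δ/2 with hδ'def
  have hδ'0 : 0 < δ' := by positivity
  have hδ'π : δ' ≤ π := by linarith
  have hcc : Real.cos δ < Real.cos δ' :=
    Real.cos_lt_cos_of_nonneg_of_le_pi (by linarith) hδπ (by linarith)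
  -- the exponential correction tends to 0
  have htend : Tendsto (fun x : ℝ => (2*(2*π)/δ') * Real.exp (x * (Real.cos δ - Real.cos δ')))
      atTop (nhds 0) := by
    have h1 : Tendsto (fun x : ℝ => x * (Real.cos δ - Real.cos δ')) atTop atBot := by
      apply Filter.tendsto_id.atTop_mul_const_of_neg (by linarith)
    have h2 := Real.tendsto_exp_atBot.comp h1
    simpa using h2.const_mul (2*(2*π)/δ')
  have hev : ∀ᶠ x in atTop,
      (2*(2*π)/δ') * Real.exp (x * (Real.cos δ - Real.cos δ')) < ε/2 :=
    htend.eventually_lt_const (by linarith)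
  obtain ⟨M, hM⟩ := (hev.and (eventually_ge_atTop (0:ℝ))).exists_forall_of_atTop
  refine ⟨M, fun x hx => ?_⟩
  obtain ⟨hxsmall, hx0⟩ := hM x hx
  -- assemble
  have hD := hD_pos x
  have hDlow := hD_lower x hx0 δ' hδ'0 hδ'π
  have hNup := hN_upper x hx0 δ hδ0 hδπ
  have hEδ := Real.exp_pos (x * Real.cos δ)
  have hEδ' := Real.exp_pos (x * Real.cos δ')
  have key : N x / D x ≤ (1 - Real.cos δ)
      + (2*(2*π)/δ') * Real.exp (x * (Real.cos δ - Real.cos δ')) := by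
    have step1 : N x / D x ≤ (1 - Real.cos δ)
        + (2*(2*π)) * Real.exp (x * Real.cos δ) / D x := by
      rw [div_le_iff₀ hD]
      have hexp : ((1 - Real.cos δ) + (2*(2*π)) * Real.exp (x * Real.cos δ) / D x) * D x
          = (1 - Real.cos δ) * D x + (2*(2*π)) * Real.exp (x * Real.cos δ) := by
        field_simp
      linarith [hexp.ge, hNup]
    have step2 : (2*(2*π)) * Real.exp (x * Real.cos δ) / D x
        ≤ (2*(2*π)) * Real.exp (x * Real.cos δ) / (δ' * Real.exp (x * Real.cos δ')) := by
      apply div_le_div_of_nonneg_left (by positivity) (by positivity) hDlow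
    have step3 : (2*(2*π)) * Real.exp (x * Real.cos δ) / (δ' * Real.exp (x * Real.cos δ'))
        = (2*(2*π)/δ') * Real.exp (x * (Real.cos δ - Real.cos δ')) := by
      rw [mul_sub, Real.exp_sub]
      field_simp
      try ring
    linarith [step3.le, step3.ge]
  have hdist : dist (V x) 1 = N x / D x := by
    rw [Real.dist_eq, hNDV x, abs_neg, abs_of_nonneg (div_nonneg (hN_nonneg x) hD.le)]
  rw [hdist]
  calc N x / D x ≤ _ := key
    _ < ε/2 + ε/2 := by linarith
    _ = ε := by ring
end

section
/- Ordering of non-symmetric solutions: suppose L < 0, r, r₁, r₂ ∈ (0, 1) with r = V((K+L)r), r₁ = V(K r₁ + L r₂), r₂ = V(K r₂ + L r₁), and r₁ > r₂. Then r₂ < r < r₁. -/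
open Real MeasureTheory intervalIntegral

namespace OrderedAux

noncomputable def Fi (x : ℝ) : ℝ := ∫ θ in (0:ℝ)..(2*π), Real.exp (x * Real.cos θ)
noncomputable def Gi (x : ℝ) : ℝ := ∫ θ in (0:ℝ)..(2*π), Real.cos θ * Real.exp (x * Real.cos θ)
noncomputable def Hi (x : ℝ) : ℝ :=
  ∫ θ in (0:ℝ)..(2*π), (Real.cos θ)^2 * Real.exp (x * Real.cos θ)
noncomputable def W (n : ℕ) : ℝ := ∫ θ in (0:ℝ)..(2*π), (Real.cos θ)^n

lemma V_eq (x : ℝ) : V x = Gi x / Fi x := rfl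

lemma Fi_pos (x : ℝ) : 0 < Fi x := by
  apply intervalIntegral_pos_of_pos ((by fun_prop : Continuous fun θ : ℝ =>
    Real.exp (x * Real.cos θ)).intervalIntegrable _ _) (fun t => Real.exp_pos _) two_pi_pos

lemma W_zero : W 0 = 2*π := by simp [W]

lemma W_one : W 1 = 0 := by simp [W, integral_cos]

lemma W_rec (n : ℕ) : W (n+2) = (n+1)/(n+2) * W n := by
  have := integral_cos_pow (a := 0) (b := 2*π) n
  simp only [Real.sin_two_pi, Real.sin_zero, mul_zero, sub_zero, zero_div, zero_add,
    mul_zero, zero_sub, neg_zero] at this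
  simpa [W] using this

lemma W_odd (k : ℕ) : W (2*k+1) = 0 := by
  induction k with
  | zero => simpa using W_one
  | succ n ih =>
      have : 2*(n+1)+1 = (2*n+1)+2 := by ring
      rw [this, W_rec, ih, mul_zero]

lemma W_even_pos (k : ℕ) : 0 < W (2*k) := by
  induction k with
  | zero => rw [W_zero]; exact two_pi_pos
  | succ n ih =>
      have h : 2*(n+1) = (2*n)+2 := by ring
      rw [h, W_rec]
      have : (0:ℝ) < ((2*n : ℕ):ℝ)+1 := by positivity
      positivity

lemma W_abs_le (n : ℕ) : |W n| ≤ 2*π := by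
  have h := intervalIntegral.norm_integral_le_of_norm_le_const (C := 1)
    (f := fun θ : ℝ => (Real.cos θ)^n) (a := 0) (b := 2*π) ?_
  · rw [Real.norm_eq_abs] at h
    calc |W n| ≤ 1 * |2*π - 0| := h
    _ = 2*π := by rw [one_mul, sub_zero, abs_of_pos Real.two_pi_pos]
  · intro x _
    rw [Real.norm_eq_abs, abs_pow]
    exact pow_le_one₀ (abs_nonneg _) (Real.abs_cos_le_one x)


lemma integral_cospow_exp (x : ℝ) (m : ℕ) :
    (∫ θ in (0:ℝ)..(2*π), (Real.cos θ)^m * Real.exp (x * Real.cos θ))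
      = ∑' n : ℕ, x^n / (n.factorial : ℝ) * W (n + m) := by
  set μ := volume.restrict (Set.Ioc (0:ℝ) (2*π)) with hμ
  haveI : IsFiniteMeasure μ := by
    constructor
    rw [hμ, Measure.restrict_apply_univ]
    exact measure_Ioc_lt_top
  have hpt : ∀ θ : ℝ, HasSum (fun n : ℕ => x^n / (n.factorial : ℝ) * (Real.cos θ)^(n+m))
      ((Real.cos θ)^m * Real.exp (x * Real.cos θ)) := by
    intro θ
    have h := (NormedSpace.expSeries_div_hasSum_exp (x * Real.cos θ)).mul_left
      ((Real.cos θ)^m)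
    rw [← Real.exp_eq_exp_ℝ] at h
    convert h using 2 with n
    · rfl
    rw [mul_pow, pow_add]
    ring
  have hint : ∀ n : ℕ, Integrable
      (fun θ : ℝ => x^n / (n.factorial : ℝ) * (Real.cos θ)^(n+m)) μ :=
    fun n => (by fun_prop : Continuous fun θ : ℝ =>
      x^n / (n.factorial : ℝ) * (Real.cos θ)^(n+m)).integrableOn_Ioc
  have hbd : ∀ n : ℕ, (∫ θ, ‖x^n / (n.factorial : ℝ) * (Real.cos θ)^(n+m)‖ ∂μ)
      ≤ |x|^n / (n.factorial : ℝ) * (2*π) := by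
    intro n
    have h1 : ∀ θ : ℝ, ‖x^n / (n.factorial : ℝ) * (Real.cos θ)^(n+m)‖
        ≤ |x|^n / (n.factorial : ℝ) := by
      intro θ
      rw [Real.norm_eq_abs, abs_mul, abs_div, abs_pow, Nat.abs_cast]
      have h2 : |Real.cos θ ^ (n+m)| ≤ 1 := by
        rw [abs_pow]; exact pow_le_one₀ (abs_nonneg _) (Real.abs_cos_le_one θ)
      calc |x|^n / (n.factorial : ℝ) * |Real.cos θ ^ (n+m)|
          ≤ |x|^n / (n.factorial : ℝ) * 1 := by
            apply mul_le_mul_of_nonneg_left h2; positivity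
      _ = |x|^n / (n.factorial : ℝ) := mul_one _
    calc (∫ θ, ‖x^n / (n.factorial : ℝ) * (Real.cos θ)^(n+m)‖ ∂μ)
        ≤ ∫ _θ, |x|^n / (n.factorial : ℝ) ∂μ :=
          integral_mono (hint n).norm (integrable_const _) h1
    _ = (μ Set.univ).toReal * (|x|^n / (n.factorial : ℝ)) := by
          rw [MeasureTheory.integral_const, smul_eq_mul]; rfl
    _ ≤ |x|^n / (n.factorial : ℝ) * (2*π) := by
          rw [hμ, Measure.restrict_apply_univ, Real.volume_Ioc, sub_zero,
            ENNReal.toReal_ofReal Real.two_pi_pos.le, mul_comm]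
  have hsum : Summable fun n : ℕ => ∫ θ, ‖x^n / (n.factorial : ℝ) * (Real.cos θ)^(n+m)‖ ∂μ := by
    apply Summable.of_nonneg_of_le (fun n => integral_nonneg (fun θ => norm_nonneg _)) hbd
    exact (Real.summable_pow_div_factorial |x|).mul_right _
  have key := MeasureTheory.integral_tsum_of_summable_integral_norm hint hsum
  have hW : ∀ j : ℕ, W j = ∫ θ, (Real.cos θ)^j ∂μ := by
    intro j
    rw [W, intervalIntegral.integral_of_le Real.two_pi_pos.le]
  have h2 : (fun θ : ℝ => (Real.cos θ)^m * Real.exp (x * Real.cos θ))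
      = fun θ => ∑' n : ℕ, x^n / (n.factorial : ℝ) * (Real.cos θ)^(n+m) :=
    funext fun θ => ((hpt θ).tsum_eq).symm
  rw [intervalIntegral.integral_of_le Real.two_pi_pos.le]
  show (∫ θ, (Real.cos θ)^m * Real.exp (x * Real.cos θ) ∂μ) = _
  rw [h2, ← key]
  apply tsum_congr
  intro n
  rw [MeasureTheory.integral_const_mul, hW]

lemma hinj2 : Function.Injective (fun k : ℕ => 2*k) := fun a b h => by
  have h' : 2*a = 2*b := h; omega
lemma hinj2' : Function.Injective (fun k : ℕ => 2*k+1) := fun a b h => by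
  have h' : 2*a+1 = 2*b+1 := h; omega

noncomputable def bc (k : ℕ) : ℝ := W (2*k) / ((2*k).factorial : ℝ)
noncomputable def ac (k : ℕ) : ℝ := W (2*k+2) / ((2*k+1).factorial : ℝ)

lemma bc_pos (k : ℕ) : 0 < bc k := by
  rw [bc]
  have := W_even_pos k
  positivity

lemma ac_eq (k : ℕ) : ac k = bc k / (2*k+2) := by
  rw [ac, bc]
  rw [show 2*k+2 = (2*k)+2 from rfl, W_rec]
  rw [Nat.factorial_succ]
  push_cast
  have h1 : ((2*k).factorial : ℝ) > 0 := by positivity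
  have h2 : (2*(k:ℝ)+1) > 0 := by positivity
  field_simp

lemma ac_pos (k : ℕ) : 0 < ac k := by
  rw [ac_eq]
  have := bc_pos k
  positivity

-- summability of the full series with shifted W
lemma summable_full (x : ℝ) (m : ℕ) :
    Summable (fun n : ℕ => x^n / (n.factorial : ℝ) * W (n+m)) := by
  have hb : Summable (fun n : ℕ => |x|^n / (n.factorial : ℝ) * (2*π)) :=
    (Real.summable_pow_div_factorial |x|).mul_right _
  refine Summable.of_norm (hb.of_nonneg_of_le (fun n => norm_nonneg _) (fun n => ?_))
  rw [Real.norm_eq_abs, abs_mul, abs_div, abs_pow, Nat.abs_cast]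
  apply mul_le_mul_of_nonneg_left (W_abs_le _)
  positivity

lemma Fi_series (x : ℝ) : Fi x = ∑' n : ℕ, x^n / (n.factorial : ℝ) * W n := by
  have := integral_cospow_exp x 0
  simp only [pow_zero, one_mul, Nat.add_zero] at this
  rw [Fi, this]

lemma Gi_series (x : ℝ) : Gi x = ∑' n : ℕ, x^n / (n.factorial : ℝ) * W (n+1) := by
  have := integral_cospow_exp x 1
  simp only [pow_one] at this
  rw [Gi, this]

lemma summable_b (x : ℝ) : Summable (fun k : ℕ => bc k * x^(2*k)) := by
  have h := (summable_full x 0).comp_injective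
    hinj2
  apply h.congr
  intro k
  simp only [Function.comp_apply, Nat.add_zero, bc]
  ring

lemma summable_a (x : ℝ) : Summable (fun k : ℕ => ac k * x^(2*k+1)) := by
  have h := (summable_full x 1).comp_injective
    hinj2'
  apply h.congr
  intro k
  simp only [Function.comp_apply, ac]
  ring

lemma Fi_series' (x : ℝ) : Fi x = ∑' k : ℕ, bc k * x^(2*k) := by
  rw [Fi_series]
  set f : ℕ → ℝ := fun n => x^n / (n.factorial : ℝ) * W n with hf
  have hfull : Summable f := by
    apply (summable_full x 0).congr
    intro n; rw [hf]; norm_num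
  have he : Summable (fun k => f (2*k)) := hfull.comp_injective hinj2
  have ho : Summable (fun k => f (2*k+1)) := hfull.comp_injective hinj2'
  rw [← tsum_even_add_odd he ho]
  have h1 : ∀ k : ℕ, f (2*k+1) = 0 := fun k => by rw [hf]; simp [W_odd]
  simp only [h1, tsum_zero, add_zero]
  apply tsum_congr
  intro k
  rw [hf, bc]; ring

lemma Gi_series' (x : ℝ) : Gi x = ∑' k : ℕ, ac k * x^(2*k+1) := by
  rw [Gi_series]
  set f : ℕ → ℝ := fun n => x^n / (n.factorial : ℝ) * W (n+1) with hf
  have hfull : Summable f := summable_full x 1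
  have he : Summable (fun k => f (2*k)) := hfull.comp_injective hinj2
  have ho : Summable (fun k => f (2*k+1)) := hfull.comp_injective hinj2'
  rw [← tsum_even_add_odd he ho]
  have h1 : ∀ k : ℕ, f (2*k) = 0 := fun k => by rw [hf]; simp [W_odd]
  simp only [h1, tsum_zero, zero_add]
  apply tsum_congr
  intro k
  rw [hf, ac]
  have : 2*k+1+1 = 2*k+2 := rfl
  rw [this]; ring

lemma abs_summable_a (x : ℝ) : Summable (fun j : ℕ => ‖ac j * x^(2*j+1)‖) := by
  apply (summable_a |x|).congr
  intro k
  rw [Real.norm_eq_abs, abs_mul, abs_of_pos (ac_pos k), abs_pow]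

lemma abs_summable_b (x : ℝ) : Summable (fun j : ℕ => ‖bc j * x^(2*j)‖) := by
  apply (summable_b |x|).congr
  intro k
  rw [Real.norm_eq_abs, abs_mul, abs_of_pos (bc_pos k), abs_pow]

lemma coeff_ineq {j k : ℕ} (hjk : j ≤ k) : ac k * bc j ≤ ac j * bc k := by
  have ha : ac k * bc j = (bc j * bc k) / (2*(k:ℝ)+2) := by rw [ac_eq]; ring
  have hb : ac j * bc k = (bc j * bc k) / (2*(j:ℝ)+2) := by rw [ac_eq]; ring
  rw [ha, hb]
  have h3 : (j:ℝ) ≤ (k:ℝ) := by exact_mod_cast hjk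
  have h1 := bc_pos j
  have h2 := bc_pos k
  gcongr

lemma coeff_ineq_strict {j k : ℕ} (hjk : j < k) : ac k * bc j < ac j * bc k := by
  have ha : ac k * bc j = (bc j * bc k) / (2*(k:ℝ)+2) := by rw [ac_eq]; ring
  have hb : ac j * bc k = (bc j * bc k) / (2*(j:ℝ)+2) := by rw [ac_eq]; ring
  rw [ha, hb]
  have h3 : (j:ℝ) < (k:ℝ) := by exact_mod_cast hjk
  have h1 := bc_pos j
  have h2 := bc_pos k
  apply div_lt_div_of_pos_left (by positivity) (by positivity) (by linarith)

lemma pow_ineq {x y : ℝ} (hy : 0 < y) (hyx : y ≤ x) {j k : ℕ} (hjk : j ≤ k) :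
    x^(2*j+1) * y^(2*k+1) ≤ y^(2*j+1) * x^(2*k+1) := by
  have hx : 0 < x := lt_of_lt_of_le hy hyx
  obtain ⟨d, rfl⟩ := Nat.exists_eq_add_of_le hjk
  have e1 : x^(2*(j+d)+1) = x^(2*j+1) * x^(2*d) := by
    rw [show 2*(j+d)+1 = (2*j+1) + 2*d from by ring]
    exact pow_add x _ _
  have e2 : y^(2*(j+d)+1) = y^(2*j+1) * y^(2*d) := by
    rw [show 2*(j+d)+1 = (2*j+1) + 2*d from by ring]
    exact pow_add y _ _
  rw [e1, e2]
  have h2 : y^(2*d) ≤ x^(2*d) := pow_le_pow_left₀ hy.le hyx _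
  nlinarith [mul_le_mul_of_nonneg_left h2 (show (0:ℝ) ≤ x^(2*j+1)*y^(2*j+1) by positivity)]

lemma pow_ineq_strict {x y : ℝ} (hy : 0 < y) (hyx : y < x) {j k : ℕ} (hjk : j < k) :
    x^(2*j+1) * y^(2*k+1) < y^(2*j+1) * x^(2*k+1) := by
  have hx : 0 < x := lt_trans hy hyx
  obtain ⟨d, rfl⟩ := Nat.exists_eq_add_of_le hjk.le
  have hd : d ≠ 0 := by rintro rfl; omega
  have e1 : x^(2*(j+d)+1) = x^(2*j+1) * x^(2*d) := by
    rw [show 2*(j+d)+1 = (2*j+1) + 2*d from by ring]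
    exact pow_add x _ _
  have e2 : y^(2*(j+d)+1) = y^(2*j+1) * y^(2*d) := by
    rw [show 2*(j+d)+1 = (2*j+1) + 2*d from by ring]
    exact pow_add y _ _
  rw [e1, e2]
  have h2 : y^(2*d) < x^(2*d) := pow_lt_pow_left₀ hyx hy.le (by omega)
  nlinarith [mul_lt_mul_of_pos_left h2 (show (0:ℝ) < x^(2*j+1)*y^(2*j+1) by positivity)]

set_option maxHeartbeats 2000000 in
lemma cross {x y : ℝ} (hy : 0 < y) (hyx : y < x) :
    Gi x * Fi y * y < Gi y * Fi x * x := by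
  have hx : 0 < x := lt_trans hy hyx
  have hGF1 : Gi x * Fi y = ∑' p : ℕ × ℕ, (ac p.1 * x^(2*p.1+1)) * (bc p.2 * y^(2*p.2)) := by
    rw [Gi_series' x, Fi_series' y]
    exact tsum_mul_tsum_of_summable_norm (abs_summable_a x) (abs_summable_b y)
  have hGF2 : Gi y * Fi x = ∑' p : ℕ × ℕ, (ac p.1 * y^(2*p.1+1)) * (bc p.2 * x^(2*p.2)) := by
    rw [Gi_series' y, Fi_series' x]
    exact tsum_mul_tsum_of_summable_norm (abs_summable_a y) (abs_summable_b x)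
  have hs1 : Summable (fun p : ℕ × ℕ => (ac p.1 * x^(2*p.1+1)) * (bc p.2 * y^(2*p.2))) :=
    summable_mul_of_summable_norm (abs_summable_a x) (abs_summable_b y)
  have hs2 : Summable (fun p : ℕ × ℕ => (ac p.1 * y^(2*p.1+1)) * (bc p.2 * x^(2*p.2))) :=
    summable_mul_of_summable_norm (abs_summable_a y) (abs_summable_b x)
  set h : ℕ × ℕ → ℝ := fun p => ac p.1 * bc p.2 *
    (y^(2*p.1+1) * x^(2*p.2+1) - x^(2*p.1+1) * y^(2*p.2+1)) with hh
  have hsh : Summable h := by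
    apply Summable.congr ((hs2.mul_right x).sub (hs1.mul_right y))
    intro p
    rw [hh]
    ring
  have hdiff : Gi y * Fi x * x - Gi x * Fi y * y = ∑' p, h p := by
    rw [hGF1, hGF2, ← tsum_mul_right, ← tsum_mul_right,
      ← Summable.tsum_sub (hs2.mul_right x) (hs1.mul_right y)]
    apply tsum_congr
    intro p
    rw [hh]
    ring
  have hswap_summable : Summable (fun p : ℕ × ℕ => h (p.2, p.1)) :=
    hsh.comp_injective (Equiv.prodComm ℕ ℕ).injective
  have hswap : ∑' p : ℕ × ℕ, h (p.2, p.1) = ∑' p, h p :=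
    (Equiv.prodComm ℕ ℕ).tsum_eq h
  have hterm : ∀ j k : ℕ, h (j,k) + h (k,j)
      = (ac j * bc k - ac k * bc j) * (y^(2*j+1) * x^(2*k+1) - x^(2*j+1) * y^(2*k+1)) := by
    intro j k
    rw [hh]
    ring
  have hnonneg : ∀ p : ℕ × ℕ, 0 ≤ h p + h (p.2, p.1) := by
    rintro ⟨j, k⟩
    rw [hterm j k]
    rcases le_total j k with hjk | hkj
    · apply mul_nonneg
      · linarith [coeff_ineq hjk]
      · linarith [pow_ineq hy hyx.le hjk]
    · have c1 := coeff_ineq hkj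
      have c2 := pow_ineq hy hyx.le hkj
      nlinarith [mul_nonneg (sub_nonneg.mpr c1) (sub_nonneg.mpr c2)]
  have hone : 0 < h (0,1) + h (1,0) := by
    rw [hterm 0 1]
    apply mul_pos
    · linarith [coeff_ineq_strict (by norm_num : (0:ℕ) < 1)]
    · linarith [pow_ineq_strict hy hyx (by norm_num : (0:ℕ) < 1)]
  have hpos : 0 < ∑' p : ℕ × ℕ, (h p + h (p.2, p.1)) := by
    apply Summable.tsum_pos (hsh.add hswap_summable) hnonneg ((0:ℕ), (1:ℕ))
    exact hone
  have hdouble : ∑' p : ℕ × ℕ, (h p + h (p.2, p.1)) = 2 * ∑' p, h p := by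
    rw [Summable.tsum_add hsh hswap_summable, hswap]
    ring
  rw [hdouble, ← hdiff] at hpos
  linarith

lemma exp_bound_aux {x₀ x t : ℝ} (hx : x ∈ Metric.ball x₀ 1) (m : ℕ) :
    ‖(Real.cos t)^m * Real.exp (x * Real.cos t)‖ ≤ Real.exp (|x₀| + 1) := by
  rw [Real.norm_eq_abs, abs_mul, abs_pow]
  have h1 : |Real.cos t|^m ≤ 1 := pow_le_one₀ (abs_nonneg _) (Real.abs_cos_le_one t)
  have h2 : |Real.exp (x * Real.cos t)| = Real.exp (x * Real.cos t) := abs_of_pos (Real.exp_pos _)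
  rw [h2]
  have h3 : x * Real.cos t ≤ |x₀| + 1 := by
    have hxx : |x - x₀| < 1 := by simpa [Real.dist_eq] using hx
    have : |x * Real.cos t| ≤ |x| * 1 :=
      (abs_mul _ _).le.trans (mul_le_mul_of_nonneg_left (Real.abs_cos_le_one t) (abs_nonneg _))
    have h4 : |x| ≤ |x₀| + 1 := by
      have := abs_sub_abs_le_abs_sub x x₀
      linarith
    calc x * Real.cos t ≤ |x * Real.cos t| := le_abs_self _
      _ ≤ |x| * 1 := this
      _ ≤ |x₀| + 1 := by linarith
  calc |Real.cos t|^m * Real.exp (x * Real.cos t) ≤ 1 * Real.exp (x * Real.cos t) := by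
        apply mul_le_mul_of_nonneg_right h1 (Real.exp_pos _).le
    _ = Real.exp (x * Real.cos t) := one_mul _
    _ ≤ Real.exp (|x₀| + 1) := Real.exp_le_exp.mpr h3

lemma hasDerivAt_Fi (x₀ : ℝ) : HasDerivAt Fi (Gi x₀) x₀ := by
  have h := intervalIntegral.hasDerivAt_integral_of_dominated_loc_of_deriv_le
    (F := fun x θ => Real.exp (x * Real.cos θ))
    (F' := fun x θ => Real.cos θ * Real.exp (x * Real.cos θ))
    (a := (0:ℝ)) (b := 2*π) (x₀ := x₀) (μ := volume)
    (bound := fun _ => Real.exp (|x₀| + 1)) (s := Metric.ball x₀ 1) (Metric.ball_mem_nhds x₀ one_pos)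
    ?_ ?_ ?_ ?_ ?_ ?_
  · exact h.2
  · filter_upwards with x
    exact ((by fun_prop : Continuous fun θ : ℝ => Real.exp (x * Real.cos θ))).aestronglyMeasurable
  · exact ((by fun_prop : Continuous fun θ : ℝ =>
      Real.exp (x₀ * Real.cos θ))).intervalIntegrable _ _
  · exact ((by fun_prop : Continuous fun θ : ℝ =>
      Real.cos θ * Real.exp (x₀ * Real.cos θ))).aestronglyMeasurable
  · filter_upwards with t _ x hx
    simpa using exp_bound_aux hx 1
  · exact intervalIntegrable_const
  · filter_upwards with t _ x _
    have : HasDerivAt (fun y : ℝ => y * Real.cos t) (Real.cos t) x := hasDerivAt_mul_const _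
    simpa [mul_comm] using this.exp

lemma hasDerivAt_Gi (x₀ : ℝ) : HasDerivAt Gi (Hi x₀) x₀ := by
  have h := intervalIntegral.hasDerivAt_integral_of_dominated_loc_of_deriv_le
    (F := fun x θ => Real.cos θ * Real.exp (x * Real.cos θ))
    (F' := fun x θ => (Real.cos θ)^2 * Real.exp (x * Real.cos θ))
    (a := (0:ℝ)) (b := 2*π) (x₀ := x₀) (μ := volume)
    (bound := fun _ => Real.exp (|x₀| + 1)) (s := Metric.ball x₀ 1) (Metric.ball_mem_nhds x₀ one_pos)
    ?_ ?_ ?_ ?_ ?_ ?_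
  · exact h.2
  · filter_upwards with x
    exact ((by fun_prop : Continuous fun θ : ℝ =>
      Real.cos θ * Real.exp (x * Real.cos θ))).aestronglyMeasurable
  · exact ((by fun_prop : Continuous fun θ : ℝ =>
      Real.cos θ * Real.exp (x₀ * Real.cos θ))).intervalIntegrable _ _
  · exact ((by fun_prop : Continuous fun θ : ℝ =>
      (Real.cos θ)^2 * Real.exp (x₀ * Real.cos θ))).aestronglyMeasurable
  · filter_upwards with t _ x hx
    exact exp_bound_aux hx 2
  · exact intervalIntegrable_const
  · filter_upwards with t _ x _
    have : HasDerivAt (fun y : ℝ => y * Real.cos t) (Real.cos t) x := hasDerivAt_mul_const _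
    have h2 := (this.exp).const_mul (Real.cos t)
    convert h2 using 1
    · rfl
    rw [pow_two]
    ring

lemma var_pos (x : ℝ) : 0 < Hi x * Fi x - Gi x * Gi x := by
  set v := Gi x / Fi x with hv
  have hFi := Fi_pos x
  have hcont : Continuous fun θ : ℝ => (Real.cos θ - v)^2 * Real.exp (x * Real.cos θ) := by
    fun_prop
  have hJ : 0 < ∫ θ in (0:ℝ)..(2*π), (Real.cos θ - v)^2 * Real.exp (x * Real.cos θ) := by
    have hnn : ∀ u : ℝ, 0 ≤ (Real.cos u - v)^2 * Real.exp (x * Real.cos u) :=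
      fun u => mul_nonneg (sq_nonneg _) (Real.exp_pos _).le
    rcases le_or_gt 0 v with hv0 | hv0
    · -- positive on (π/2, π)
      have hsplit : (∫ θ in (0:ℝ)..(π/2), (Real.cos θ - v)^2 * Real.exp (x * Real.cos θ))
          + (∫ θ in (π/2)..(π), (Real.cos θ - v)^2 * Real.exp (x * Real.cos θ))
          + (∫ θ in (π)..(2*π), (Real.cos θ - v)^2 * Real.exp (x * Real.cos θ))
          = ∫ θ in (0:ℝ)..(2*π), (Real.cos θ - v)^2 * Real.exp (x * Real.cos θ) := by
        rw [integral_add_adjacent_intervals (hcont.intervalIntegrable _ _)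
          (hcont.intervalIntegrable _ _),
          integral_add_adjacent_intervals (hcont.intervalIntegrable _ _)
          (hcont.intervalIntegrable _ _)]
      rw [← hsplit]
      have h1 : 0 ≤ ∫ θ in (0:ℝ)..(π/2), (Real.cos θ - v)^2 * Real.exp (x * Real.cos θ) :=
        intervalIntegral.integral_nonneg (by positivity) (fun u _ => hnn u)
      have h3 : 0 ≤ ∫ θ in (π)..(2*π), (Real.cos θ - v)^2 * Real.exp (x * Real.cos θ) :=
        intervalIntegral.integral_nonneg (by linarith [Real.pi_pos]) (fun u _ => hnn u)
      have h2 : 0 < ∫ θ in (π/2)..(π), (Real.cos θ - v)^2 * Real.exp (x * Real.cos θ) := by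
        apply intervalIntegral_pos_of_pos_on (hcont.intervalIntegrable _ _)
        · intro u hu
          have hcos : Real.cos u < 0 := by
            apply Real.cos_neg_of_pi_div_two_lt_of_lt hu.1
            linarith [hu.2, Real.pi_pos]
          have hne : Real.cos u - v ≠ 0 := ne_of_lt (by linarith)
          exact mul_pos (lt_of_le_of_ne (sq_nonneg _) (Ne.symm (pow_ne_zero 2 hne)))
            (Real.exp_pos _)
        · linarith [Real.pi_pos]
      linarith
    · -- v < 0 : positive on (0, π/2)
      have hsplit : (∫ θ in (0:ℝ)..(π/2), (Real.cos θ - v)^2 * Real.exp (x * Real.cos θ))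
          + (∫ θ in (π/2)..(2*π), (Real.cos θ - v)^2 * Real.exp (x * Real.cos θ))
          = ∫ θ in (0:ℝ)..(2*π), (Real.cos θ - v)^2 * Real.exp (x * Real.cos θ) :=
        integral_add_adjacent_intervals (hcont.intervalIntegrable _ _)
          (hcont.intervalIntegrable _ _)
      rw [← hsplit]
      have h1 : 0 < ∫ θ in (0:ℝ)..(π/2), (Real.cos θ - v)^2 * Real.exp (x * Real.cos θ) := by
        apply intervalIntegral_pos_of_pos_on (hcont.intervalIntegrable _ _)
        · intro u hu
          have hcos : 0 < Real.cos u := by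
            apply Real.cos_pos_of_mem_Ioo
            constructor
            · linarith [hu.1, Real.pi_pos]
            · exact hu.2
          have hne : Real.cos u - v ≠ 0 := ne_of_gt (by linarith)
          exact mul_pos (lt_of_le_of_ne (sq_nonneg _) (Ne.symm (pow_ne_zero 2 hne)))
            (Real.exp_pos _)
        · linarith [Real.pi_pos]
      have h2 : 0 ≤ ∫ θ in (π/2)..(2*π), (Real.cos θ - v)^2 * Real.exp (x * Real.cos θ) :=
        intervalIntegral.integral_nonneg (by linarith [Real.pi_pos]) (fun u _ => hnn u)
      linarith
  have hexpand : (∫ θ in (0:ℝ)..(2*π), (Real.cos θ - v)^2 * Real.exp (x * Real.cos θ))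
      = Hi x - 2*v*Gi x + v^2 * Fi x := by
    have hint1 : IntervalIntegrable (fun θ : ℝ => (Real.cos θ)^2 * Real.exp (x * Real.cos θ))
        volume 0 (2*π) := (by fun_prop : Continuous _).intervalIntegrable _ _
    have hint2 : IntervalIntegrable (fun θ : ℝ =>
        (2*v) * (Real.cos θ * Real.exp (x * Real.cos θ))) volume 0 (2*π) :=
      ((by fun_prop : Continuous fun θ : ℝ =>
        Real.cos θ * Real.exp (x * Real.cos θ)).intervalIntegrable _ _).const_mul _
    have hint3 : IntervalIntegrable (fun θ : ℝ => v^2 * Real.exp (x * Real.cos θ))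
        volume 0 (2*π) :=
      ((by fun_prop : Continuous fun θ : ℝ =>
        Real.exp (x * Real.cos θ)).intervalIntegrable _ _).const_mul _
    have heq : ∀ θ : ℝ, (Real.cos θ - v)^2 * Real.exp (x * Real.cos θ)
        = (Real.cos θ)^2 * Real.exp (x * Real.cos θ)
          - (2*v) * (Real.cos θ * Real.exp (x * Real.cos θ))
          + v^2 * Real.exp (x * Real.cos θ) := by
      intro θ; ring
    rw [intervalIntegral.integral_congr (fun θ _ => heq θ)]
    rw [intervalIntegral.integral_add (hint1.sub hint2) hint3,
      intervalIntegral.integral_sub hint1 hint2,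
      intervalIntegral.integral_const_mul, intervalIntegral.integral_const_mul]
    rfl
  rw [hexpand] at hJ
  have : Fi x * (Hi x - 2*v*Gi x + v^2 * Fi x) = Hi x * Fi x - Gi x * Gi x := by
    rw [hv]
    field_simp
    ring
  nlinarith [mul_pos hFi hJ]

lemma hasDerivAt_V (x : ℝ) :
    HasDerivAt V ((Hi x * Fi x - Gi x * Gi x) / (Fi x)^2) x := by
  have h := (hasDerivAt_Gi x).div (hasDerivAt_Fi x) (Fi_pos x).ne'
  have hV : V = fun x => Gi x / Fi x := funext fun x => V_eq x
  rw [hV]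
  exact h

lemma V_mono : StrictMono V := by
  apply strictMono_of_deriv_pos
  intro x
  rw [(hasDerivAt_V x).deriv]
  exact div_pos (var_pos x) (pow_pos (Fi_pos x) 2)

lemma V_zero : V 0 = 0 := by
  rw [V_eq]
  have : Gi 0 = 0 := by
    rw [Gi]
    norm_num [integral_cos]
  rw [this, zero_div]


lemma V_ratio {y x : ℝ} (hy : 0 < y) (hyx : y < x) : y * V x < x * V y := by
  have hx : 0 < x := lt_trans hy hyx
  have h := cross hy hyx
  rw [V_eq, V_eq]
  rw [show y * (Gi x / Fi x) = (y * Gi x)/(Fi x) from by ring,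
      show x * (Gi y / Fi y) = (x * Gi y)/(Fi y) from by ring,
      div_lt_div_iff₀ (Fi_pos x) (Fi_pos y)]
  nlinarith [h]

end OrderedAux

open OrderedAux in
theorem ordered_solutions (K L r r₁ r₂ : ℝ) (hL : L < 0)
    (hr : r ∈ Set.Ioo (0:ℝ) 1) (hr₁ : r₁ ∈ Set.Ioo (0:ℝ) 1) (hr₂ : r₂ ∈ Set.Ioo (0:ℝ) 1)
    (e : r = V ((K + L) * r))
    (e₁ : r₁ = V (K * r₁ + L * r₂)) (e₂ : r₂ = V (K * r₂ + L * r₁))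
    (h12 : r₂ < r₁) :
    r₂ < r ∧ r < r₁ := by
  obtain ⟨hr0, -⟩ := hr
  obtain ⟨hr10, -⟩ := hr₁
  obtain ⟨hr20, -⟩ := hr₂
  have hcr : 0 < (K + L) * r := by
    by_contra hcr
    push_neg at hcr
    have h2 : V ((K + L) * r) ≤ V 0 := by
      rcases eq_or_lt_of_le hcr with h | h
      · rw [h]
      · exact (V_mono h).le
    rw [V_zero, ← e] at h2
    linarith
  have hcpos : 0 < K + L := by
    rcases le_or_gt (K + L) 0 with h | h
    · exfalso; nlinarith
    · exact h
  have harg1 : (K + L) * r₁ < K * r₁ + L * r₂ := by nlinarith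
  have key1 : V ((K + L) * r₁) < r₁ :=
    calc V ((K + L) * r₁) < V (K * r₁ + L * r₂) := V_mono harg1
    _ = r₁ := e₁.symm
  have harg2 : K * r₂ + L * r₁ < (K + L) * r₂ := by nlinarith
  have key2 : r₂ < V ((K + L) * r₂) :=
    calc r₂ = V (K * r₂ + L * r₁) := e₂
    _ < V ((K + L) * r₂) := V_mono harg2
  constructor
  · by_contra hle
    push_neg at hle
    rcases eq_or_lt_of_le hle with heq | hlt
    · rw [← heq, ← e] at key2
      linarith
    · have h1 : (K + L) * r < (K + L) * r₂ := by nlinarith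
      have h2 := V_ratio hcr h1
      rw [← e] at h2
      nlinarith [mul_lt_mul_of_pos_left key2 hcr]
  · by_contra hle
    push_neg at hle
    rcases eq_or_lt_of_le hle with heq | hlt
    · rw [heq, ← e] at key1
      linarith
    · have hcr1 : 0 < (K + L) * r₁ := mul_pos hcpos hr10
      have h1 : (K + L) * r₁ < (K + L) * r := by nlinarith
      have h2 := V_ratio hcr1 h1
      rw [← e] at h2
      nlinarith [mul_lt_mul_of_pos_left key1 hcr]
end

section
/- Non-symmetric bifurcation requires L < 0: if r* > 0 satisfies r* = V((K+L)r*) and 1/(K−L) = V'((K+L)r*), with K+L > 2, then L < 0. -/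
open Real MeasureTheory intervalIntegral

noncomputable def CI (n : ℕ) (x : ℝ) : ℝ :=
  ∫ θ in (0:ℝ)..(2*π), Real.cos θ ^ n * Real.exp (x * Real.cos θ)

lemma cont_integrand (n : ℕ) (x : ℝ) :
    Continuous (fun θ : ℝ => Real.cos θ ^ n * Real.exp (x * Real.cos θ)) := by
  fun_prop

lemma CI_integrable (n : ℕ) (x : ℝ) (a b : ℝ) :
    IntervalIntegrable (fun θ : ℝ => Real.cos θ ^ n * Real.exp (x * Real.cos θ)) volume a b :=
  (cont_integrand n x).intervalIntegrable a b

lemma hasDerivAt_CI (n : ℕ) (x : ℝ) : HasDerivAt (CI n) (CI (n+1) x) x := by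
  have h := intervalIntegral.hasDerivAt_integral_of_dominated_loc_of_deriv_le
    (F := fun y θ => Real.cos θ ^ n * Real.exp (y * Real.cos θ))
    (F' := fun y θ => Real.cos θ ^ (n+1) * Real.exp (y * Real.cos θ))
    (x₀ := x) (a := (0:ℝ)) (b := 2*π) (μ := volume)
    (bound := fun _ => Real.exp (|x| + 1))
    (s := Metric.ball x 1) (Metric.ball_mem_nhds x one_pos)
    (Filter.Eventually.of_forall fun y => (cont_integrand n y).aestronglyMeasurable)
    (CI_integrable n x 0 (2*π))
    (cont_integrand (n+1) x).aestronglyMeasurable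
    ?_ (intervalIntegrable_const) ?_
  · exact h.2
  · refine Filter.Eventually.of_forall fun θ _ y hy => ?_
    have h1 : |Real.cos θ ^ (n+1)| ≤ 1 := by
      rw [abs_pow]; exact pow_le_one₀ (abs_nonneg _) (abs_cos_le_one θ)
    have h2 : Real.exp (y * Real.cos θ) ≤ Real.exp (|x| + 1) := by
      apply Real.exp_le_exp.2
      have : |y * Real.cos θ| ≤ |y| := by
        rw [abs_mul]
        nlinarith [abs_cos_le_one θ, abs_nonneg y]
      have hy' : |y| ≤ |x| + 1 := by
        have := mem_ball_iff_norm.1 hy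
        have : |y - x| < 1 := this
        calc |y| = |(y - x) + x| := by ring_nf
          _ ≤ |y - x| + |x| := abs_add_le _ _
          _ ≤ |x| + 1 := by linarith
      nlinarith [abs_le.1 this, abs_le.1 (le_trans this hy')]
    rw [Real.norm_eq_abs, abs_mul, abs_exp]
    calc |Real.cos θ ^ (n+1)| * Real.exp (y * Real.cos θ)
        ≤ 1 * Real.exp (|x| + 1) := by
          apply mul_le_mul h1 h2 (Real.exp_pos _).le one_pos.le
      _ = Real.exp (|x| + 1) := one_mul _
  · refine Filter.Eventually.of_forall fun θ _ y _ => ?_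
    have : HasDerivAt (fun y : ℝ => Real.exp (y * Real.cos θ)) (Real.cos θ * Real.exp (y * Real.cos θ)) y := by
      simpa [mul_comm] using ((hasDerivAt_id y).mul_const (Real.cos θ)).exp
    simpa [pow_succ, mul_comm, mul_assoc, mul_left_comm] using this.const_mul (Real.cos θ ^ n)

lemma CI0_pos (x : ℝ) : 0 < CI 0 x := by
  have h : ∀ θ : ℝ, 0 < Real.cos θ ^ 0 * Real.exp (x * Real.cos θ) := by
    intro θ; simp [Real.exp_pos]
  exact intervalIntegral_pos_of_pos (CI_integrable 0 x 0 (2*π)) h (by positivity)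

lemma ibp (x : ℝ) : CI 1 x = x * (CI 0 x - CI 2 x) := by
  have hderiv : ∀ θ ∈ Set.uIcc (0:ℝ) (2*π), HasDerivAt (fun θ => Real.sin θ * Real.exp (x * Real.cos θ))
      (Real.cos θ * Real.exp (x * Real.cos θ) - x * (Real.sin θ ^ 2 * Real.exp (x * Real.cos θ))) θ := by
    intro θ _
    have h1 : HasDerivAt (fun θ : ℝ => Real.exp (x * Real.cos θ))
        (x * (-Real.sin θ) * Real.exp (x * Real.cos θ)) θ := by
      simpa [mul_comm] using ((Real.hasDerivAt_cos θ).const_mul x).exp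
    have := (Real.hasDerivAt_sin θ).mul h1
    exact this.congr_deriv (by ring)
  have h0 : (∫ θ in (0:ℝ)..(2*π), (Real.cos θ * Real.exp (x * Real.cos θ)
      - x * (Real.sin θ ^ 2 * Real.exp (x * Real.cos θ))))
      = Real.sin (2*π) * Real.exp (x * Real.cos (2*π)) - Real.sin 0 * Real.exp (x * Real.cos 0) := by
    apply intervalIntegral.integral_eq_sub_of_hasDerivAt hderiv
    apply Continuous.intervalIntegrable; fun_prop
  rw [Real.sin_two_pi, Real.sin_zero] at h0
  simp only [zero_mul, sub_zero] at h0
  have hsplit : (∫ θ in (0:ℝ)..(2*π), (Real.cos θ * Real.exp (x * Real.cos θ)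
      - x * (Real.sin θ ^ 2 * Real.exp (x * Real.cos θ))))
      = CI 1 x - x * ((CI 0 x) - CI 2 x) := by
    rw [intervalIntegral.integral_sub]
    · congr 1
      · simp [CI]
      · rw [intervalIntegral.integral_const_mul]
        congr 1
        simp only [CI]
        rw [← intervalIntegral.integral_sub (CI_integrable 0 x 0 (2*π)) (CI_integrable 2 x 0 (2*π))]
        apply intervalIntegral.integral_congr
        intro θ _
        have := Real.sin_sq_add_cos_sq θ
        simp only [pow_zero, one_mul]
        nlinarith [Real.exp_pos (x * Real.cos θ)]
    · simpa using CI_integrable 1 x 0 (2*π)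
    · apply Continuous.intervalIntegrable; fun_prop
  rw [hsplit] at h0
  linarith

lemma CI0_zero : CI 0 0 = 2 * π := by simp [CI]

lemma CI1_zero : CI 1 0 = 0 := by
  simp [CI, integral_cos]

lemma CI2_zero : CI 2 0 = π := by
  have : CI 2 0 = ∫ θ in (0:ℝ)..(2*π), Real.cos θ ^ 2 := by simp [CI]
  rw [this, integral_cos_sq]
  simp [Real.sin_two_pi]

lemma sign_fact {y t : ℝ} (hy : 0 < y) : 0 ≤ t * (Real.exp (y * t) - Real.exp (-(y * t))) := by
  rcases le_or_gt 0 t with h | h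
  · have : Real.exp (-(y*t)) ≤ Real.exp (y*t) := by
      apply Real.exp_le_exp.2; nlinarith
    nlinarith
  · have : Real.exp (y*t) ≤ Real.exp (-(y*t)) := by
      apply Real.exp_le_exp.2; nlinarith
    nlinarith

lemma J_pos {y : ℝ} (hy : 0 < y) : 0 < CI 1 y - CI 3 y := by
  have hrw : CI 1 y - CI 3 y
      = ∫ θ in (0:ℝ)..(2*π), Real.sin θ ^ 2 * (Real.cos θ * Real.exp (y * Real.cos θ)) := by
    simp only [CI]
    rw [← intervalIntegral.integral_sub (CI_integrable 1 y 0 (2*π)) (CI_integrable 3 y 0 (2*π))]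
    apply intervalIntegral.integral_congr
    intro θ _
    have h := Real.sin_sq_add_cos_sq θ
    have : Real.cos θ ^ 1 = Real.cos θ := pow_one _
    linear_combination (-(Real.cos θ * Real.exp (y * Real.cos θ))) * h
  set f : ℝ → ℝ := fun θ => Real.sin θ ^ 2 * (Real.cos θ * Real.exp (y * Real.cos θ)) with hf
  have hfc : Continuous f := by fun_prop
  have hsplit : (∫ θ in (0:ℝ)..(2*π), f θ) = (∫ θ in (0:ℝ)..π, f θ) + ∫ θ in π..(2*π), f θ :=
    (intervalIntegral.integral_add_adjacent_intervals (hfc.intervalIntegrable _ _)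
      (hfc.intervalIntegrable _ _)).symm
  have hshift : (∫ θ in π..(2*π), f θ) = ∫ θ in (0:ℝ)..π, f (θ + π) := by
    rw [intervalIntegral.integral_comp_add_right (fun θ => f θ) π]
    norm_num [two_mul]
  have hcomb : (∫ θ in (0:ℝ)..π, f θ) + (∫ θ in (0:ℝ)..π, f (θ + π))
      = ∫ θ in (0:ℝ)..π, Real.sin θ ^ 2 * (Real.cos θ * (Real.exp (y * Real.cos θ) - Real.exp (-(y * Real.cos θ)))) := by
    have h2 : IntervalIntegrable (fun θ => f (θ + π)) volume 0 π :=
      Continuous.intervalIntegrable (hfc.comp (continuous_add_right π)) _ _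
    rw [← intervalIntegral.integral_add (hfc.intervalIntegrable _ _) h2]
    apply intervalIntegral.integral_congr
    intro θ _
    simp only [hf, Real.sin_add, Real.cos_add, Real.sin_pi, Real.cos_pi]
    ring_nf
  have hnneg : ∀ θ ∈ Set.Icc (0:ℝ) π,
      0 ≤ Real.sin θ ^ 2 * (Real.cos θ * (Real.exp (y * Real.cos θ) - Real.exp (-(y * Real.cos θ)))) := by
    intro θ _
    have := sign_fact (t := Real.cos θ) hy
    nlinarith [sq_nonneg (Real.sin θ)]
  have hpos : 0 < ∫ θ in (0:ℝ)..π, Real.sin θ ^ 2 * (Real.cos θ * (Real.exp (y * Real.cos θ) - Real.exp (-(y * Real.cos θ)))) := by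
    have hc : Continuous (fun θ : ℝ => Real.sin θ ^ 2 * (Real.cos θ * (Real.exp (y * Real.cos θ) - Real.exp (-(y * Real.cos θ))))) := by
      fun_prop
    have h2 : (∫ θ in (0:ℝ)..π, Real.sin θ ^ 2 * (Real.cos θ * (Real.exp (y * Real.cos θ) - Real.exp (-(y * Real.cos θ)))))
        = (∫ θ in (0:ℝ)..(π/2), Real.sin θ ^ 2 * (Real.cos θ * (Real.exp (y * Real.cos θ) - Real.exp (-(y * Real.cos θ)))))
        + ∫ θ in (π/2)..π, Real.sin θ ^ 2 * (Real.cos θ * (Real.exp (y * Real.cos θ) - Real.exp (-(y * Real.cos θ)))) :=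
      (intervalIntegral.integral_add_adjacent_intervals (hc.intervalIntegrable _ _)
        (hc.intervalIntegrable _ _)).symm
    rw [h2]
    have hA : 0 < ∫ θ in (0:ℝ)..(π/2), Real.sin θ ^ 2 * (Real.cos θ * (Real.exp (y * Real.cos θ) - Real.exp (-(y * Real.cos θ)))) := by
      apply intervalIntegral_pos_of_pos_on (hc.intervalIntegrable _ _)
      · intro θ hθ
        obtain ⟨h1, h2⟩ := hθ
        have hs : 0 < Real.sin θ := Real.sin_pos_of_pos_of_lt_pi h1 (by linarith [Real.pi_pos])
        have hcpos : 0 < Real.cos θ := Real.cos_pos_of_mem_Ioo ⟨by linarith [Real.pi_pos], h2⟩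
        have hexp : Real.exp (-(y * Real.cos θ)) < Real.exp (y * Real.cos θ) := by
          apply Real.exp_lt_exp.2; nlinarith
        exact mul_pos (pow_pos hs 2) (mul_pos hcpos (by linarith))
      · linarith [Real.pi_pos]
    have hB : 0 ≤ ∫ θ in (π/2)..π, Real.sin θ ^ 2 * (Real.cos θ * (Real.exp (y * Real.cos θ) - Real.exp (-(y * Real.cos θ)))) := by
      apply intervalIntegral.integral_nonneg (by linarith [Real.pi_pos])
      intro θ hθ
      exact hnneg θ ⟨by linarith [hθ.1, Real.pi_pos], hθ.2⟩
    linarith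
  rw [hrw, hsplit, hshift, hcomb]
  exact hpos

noncomputable def FF (y : ℝ) : ℝ := CI 0 y ^ 2 + CI 1 y ^ 2 - 2 * (CI 0 y * CI 2 y)

lemma hasDerivAt_FF (y : ℝ) : HasDerivAt FF (2 * CI 0 y * (CI 1 y - CI 3 y)) y := by
  have h0 : HasDerivAt (CI 0) (CI 1 y) y := by simpa using hasDerivAt_CI 0 y
  have h1 : HasDerivAt (CI 1) (CI 2 y) y := by simpa using hasDerivAt_CI 1 y
  have h2 : HasDerivAt (CI 2) (CI 3 y) y := by simpa using hasDerivAt_CI 2 y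
  have := ((h0.pow 2).add (h1.pow 2)).sub ((h0.mul h2).const_mul 2)
  exact this.congr_deriv (by norm_num; ring)

lemma FF_pos {x : ℝ} (hx : 0 < x) : 0 < FF x := by
  have hFF0 : FF 0 = 0 := by
    simp [FF, CI0_zero, CI1_zero, CI2_zero]; ring
  have hmono : StrictMonoOn FF (Set.Icc 0 x) := by
    apply strictMonoOn_of_deriv_pos (convex_Icc 0 x)
    · exact fun y _ => ((hasDerivAt_FF y).differentiableAt.continuousAt).continuousWithinAt
    · intro y hy
      rw [interior_Icc] at hy
      rw [(hasDerivAt_FF y).deriv]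
      have := J_pos hy.1
      have := CI0_pos y
      positivity
  have := hmono (Set.left_mem_Icc.2 hx.le) (Set.right_mem_Icc.2 hx.le) hx
  linarith [hFF0 ▸ this]

lemma G_pos {x t : ℝ} (ht : 0 < t) (htV : CI 1 x = t * CI 0 x) :
    0 < CI 0 x * CI 2 x - CI 1 x ^ 2 := by
  set g : ℝ → ℝ := fun θ => (Real.cos θ - t) ^ 2 * Real.exp (x * Real.cos θ) with hg
  have hgc : Continuous g := by fun_prop
  have hgnn : ∀ θ, 0 ≤ g θ := fun θ => by positivity
  have hint : (∫ θ in (0:ℝ)..(2*π), g θ) = CI 2 x - 2*t*CI 1 x + t^2 * CI 0 x := by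
    have expand : ∀ θ : ℝ, g θ = Real.cos θ ^ 2 * Real.exp (x * Real.cos θ)
        - 2*t*(Real.cos θ ^ 1 * Real.exp (x * Real.cos θ))
        + t^2 * (Real.cos θ ^ 0 * Real.exp (x * Real.cos θ)) := by
      intro θ; simp only [hg]; ring
    rw [intervalIntegral.integral_congr (fun θ _ => expand θ)]
    rw [intervalIntegral.integral_add (((CI_integrable 2 x 0 (2*π)).sub
        (((CI_integrable 1 x 0 (2*π)).const_mul (2*t))))) ((CI_integrable 0 x 0 (2*π)).const_mul (t^2)),
      intervalIntegral.integral_sub (CI_integrable 2 x 0 (2*π)) ((CI_integrable 1 x 0 (2*π)).const_mul (2*t)),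
      intervalIntegral.integral_const_mul, intervalIntegral.integral_const_mul]
    rfl
  have hpos : 0 < ∫ θ in (0:ℝ)..(2*π), g θ := by
    have hsplit : (∫ θ in (0:ℝ)..(2*π), g θ)
        = ((∫ θ in (0:ℝ)..(2*π/3), g θ) + ∫ θ in (2*π/3)..(4*π/3), g θ) + ∫ θ in (4*π/3)..(2*π), g θ := by
      rw [intervalIntegral.integral_add_adjacent_intervals (hgc.intervalIntegrable _ _) (hgc.intervalIntegrable _ _),
        intervalIntegral.integral_add_adjacent_intervals (hgc.intervalIntegrable _ _) (hgc.intervalIntegrable _ _)]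
    have hpi := Real.pi_pos
    have hmid : 0 < ∫ θ in (2*π/3)..(4*π/3), g θ := by
      apply intervalIntegral_pos_of_pos_on (hgc.intervalIntegrable _ _)
      · intro θ hθ
        have hcneg : Real.cos θ < 0 := by
          apply Real.cos_neg_of_pi_div_two_lt_of_lt
          · linarith [hθ.1]
          · linarith [hθ.2]
        have : Real.cos θ - t < 0 := by linarith
        have h1 : 0 < (Real.cos θ - t)^2 := by nlinarith
        simp only [hg]
        exact mul_pos h1 (Real.exp_pos _)
      · linarith
    have h1 : 0 ≤ ∫ θ in (0:ℝ)..(2*π/3), g θ :=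
      intervalIntegral.integral_nonneg (by linarith) (fun θ _ => hgnn θ)
    have h3 : 0 ≤ ∫ θ in (4*π/3)..(2*π), g θ :=
      intervalIntegral.integral_nonneg (by linarith) (fun θ _ => hgnn θ)
    linarith
  rw [hint] at hpos
  have h0 := CI0_pos x
  nlinarith [hpos, htV]

theorem bifurcation_needs_negative_L (K L rs : ℝ)
    (hrs : 0 < rs) (hKL : K + L > 2)
    (e : rs = V ((K + L) * rs))
    (hd : 1 / (K - L) = deriv V ((K + L) * rs)) :
    L < 0 := by
  set x := (K + L) * rs with hxdef
  have hx : 0 < x := by positivity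
  have hVeq : V = fun y => CI 1 y / CI 0 y := by
    funext y
    simp [V, CI]
  have hA0 := CI0_pos x
  have h0 : HasDerivAt (CI 0) (CI 1 x) x := by simpa using hasDerivAt_CI 0 x
  have h1 : HasDerivAt (CI 1) (CI 2 x) x := by simpa using hasDerivAt_CI 1 x
  have hdV : deriv V x = (CI 2 x * CI 0 x - CI 1 x * CI 1 x) / CI 0 x ^ 2 := by
    rw [hVeq]
    exact (h1.div h0 hA0.ne').deriv
  have htV : CI 1 x = rs * CI 0 x := by
    rw [hVeq] at e
    field_simp at e
    linarith [e]
  have hG : 0 < CI 0 x * CI 2 x - CI 1 x ^ 2 := G_pos hrs htV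
  have hF : 0 < CI 0 x ^ 2 + CI 1 x ^ 2 - 2 * (CI 0 x * CI 2 x) := FF_pos hx
  have hibp : CI 1 x = x * (CI 0 x - CI 2 x) := ibp x
  rw [hdV] at hd
  -- 1/(K-L) > 0 hence K - L > 0
  have hdpos : 0 < 1 / (K - L) := by
    rw [hd]
    apply div_pos (by nlinarith) (by positivity)
  have hKLpos : 0 < K - L := one_div_pos.mp hdpos
  -- key inequality : deriv < 1/(K+L)
  have hKLS : (0:ℝ) < K + L := by linarith
  have key : (CI 2 x * CI 0 x - CI 1 x * CI 1 x) / CI 0 x ^ 2 < 1 / (K + L) := by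
    have hrsx : 1 / (K + L) = (CI 0 x - CI 2 x) / CI 0 x := by
      have h1 : CI 1 x / (CI 0 x * x) = (CI 0 x - CI 2 x) / CI 0 x := by
        rw [hibp]
        field_simp
      have h2 : CI 1 x / (CI 0 x * x) = rs / x := by
        rw [htV]
        field_simp
      rw [← h1, h2, hxdef]
      field_simp
    rw [hrsx]
    rw [div_lt_div_iff₀ (by positivity) hA0]
    nlinarith
  have : 1 / (K - L) < 1 / (K + L) := by rw [hd]; exact key
  rw [div_lt_div_iff₀ hKLpos hKLS] at this
  linarith
end
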